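/- arXiv:2002.12537 — 3 statements merged into one kernel-verified Lean document; each statement's English description precedes it below -/
import Mathlib

section
/- If ξ is a metric on the space of one-dimensional probability densities, and the generalized Radon transform p ↦ (p_{f_θ})_{θ∈Ω} is injective, then ζ(p,q) := (∫_Ω ξ(p_{f_θ}, q_{f_θ})^r dθ)^{1/r} with r ≥ 1 defines a metric on the space of probability densities on ℝ^d: it is nonnegative, symmetric, satisfies the triangle inequality, and ζ(p,q)=0 iff p=q. -/
open MeasureTheory

/-- If ξ is a metric on one-dimensional probability densities and the
generalized Radon transform `p ↦ (slice θ p)_θ` is injective, then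
`ζ(p,q) = (∫_Ω ξ(p_{f_θ}, q_{f_θ})^r dθ)^{1/r}` is a metric: nonnegative, symmetric,
triangle inequality, and `ζ(p,q) = 0 ↔ p = q`. -/
theorem gspm_is_metric
    {D D1 Ω : Type*} [MeasurableSpace Ω] (μ : Measure Ω)
    (slice : Ω → D → D1)   -- θ ↦ p ↦ p_{f_θ}, the slicing (generalized Radon) map
    (ξ : D1 → D1 → ℝ)
    (r : ℝ) (hr : 1 ≤ r)
    -- ξ is a metric on one-dimensional densities:
    (hξ_nonneg : ∀ u v, 0 ≤ ξ u v)
    (hξ_symm : ∀ u v, ξ u v = ξ v u)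
    (hξ_triangle : ∀ u v w, ξ u w ≤ ξ u v + ξ v w)
    (hξ_eq : ∀ u v, ξ u v = 0 ↔ u = v)
    -- injectivity of the generalized Radon transform:
    (hinj : ∀ p q : D, (∀ θ : Ω, slice θ p = slice θ q) → p = q)
    -- integrability of the sliced distances:
    (hint : ∀ p q : D, Integrable (fun θ => (ξ (slice θ p) (slice θ q)) ^ r) μ)
    -- the measure sees every slice (so a.e. statements become everywhere):
    (hμ : ∀ s : Set Ω, μ s = 0 → s = ∅)
    (ζ : D → D → ℝ)
    (hζ : ∀ p q, ζ p q = (∫ θ, (ξ (slice θ p) (slice θ q)) ^ r ∂μ) ^ (1 / r)) :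
    (∀ p q, 0 ≤ ζ p q) ∧
    (∀ p q, ζ p q = ζ q p) ∧
    (∀ p h q, ζ p q ≤ ζ p h + ζ h q) ∧
    (∀ p q, ζ p q = 0 ↔ p = q) := by
  have hrpos : (0:ℝ) < r := lt_of_lt_of_le one_pos hr
  have hr0 : r ≠ 0 := ne_of_gt hrpos
  have hrinvpos : (0:ℝ) < 1 / r := by positivity
  -- nonnegativity of the integrand
  have hpow_nonneg : ∀ (p q : D) (θ : Ω), 0 ≤ (ξ (slice θ p) (slice θ q)) ^ r :=
    fun p q θ => Real.rpow_nonneg (hξ_nonneg _ _) r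
  have hint_nonneg : ∀ p q : D, 0 ≤ ∫ θ, (ξ (slice θ p) (slice θ q)) ^ r ∂μ :=
    fun p q => integral_nonneg (fun θ => hpow_nonneg p q θ)
  have hnn : ∀ p q, 0 ≤ ζ p q := by
    intro p q
    rw [hζ]
    exact Real.rpow_nonneg (hint_nonneg p q) _
  -- rewrite ζ in terms of a lintegral
  have key : ∀ p q : D, ζ p q =
      ((∫⁻ θ, (ENNReal.ofReal (ξ (slice θ p) (slice θ q))) ^ r ∂μ) ^ (1 / r)).toReal := by
    intro p q
    rw [hζ, integral_eq_lintegral_of_nonneg_ae (ae_of_all μ (hpow_nonneg p q)) (hint p q).1]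
    rw [← ENNReal.toReal_rpow]
    congr 2
    refine lintegral_congr fun θ => ?_
    rw [ENNReal.ofReal_rpow_of_nonneg (hξ_nonneg _ _) hrpos.le]
  -- finiteness of lintegrals
  have hfin : ∀ p q : D,
      (∫⁻ θ, (ENNReal.ofReal (ξ (slice θ p) (slice θ q))) ^ r ∂μ) ≠ ⊤ := by
    intro p q
    have h := (hint p q).2
    rw [hasFiniteIntegral_iff_ofReal (ae_of_all μ (hpow_nonneg p q))] at h
    have : (∫⁻ θ, (ENNReal.ofReal (ξ (slice θ p) (slice θ q))) ^ r ∂μ)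
        = ∫⁻ θ, ENNReal.ofReal ((ξ (slice θ p) (slice θ q)) ^ r) ∂μ := by
      refine lintegral_congr fun θ => ?_
      rw [ENNReal.ofReal_rpow_of_nonneg (hξ_nonneg _ _) hrpos.le]
    rw [this]
    exact h.ne
  have hfin' : ∀ p q : D,
      ((∫⁻ θ, (ENNReal.ofReal (ξ (slice θ p) (slice θ q))) ^ r ∂μ) ^ (1 / r)) ≠ ⊤ := by
    intro p q
    exact (ENNReal.rpow_lt_top_of_nonneg hrinvpos.le (hfin p q)).ne
  -- AEMeasurability of the ofReal distance functions
  have hmeas : ∀ p q : D,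
      AEMeasurable (fun θ => ENNReal.ofReal (ξ (slice θ p) (slice θ q))) μ := by
    intro p q
    have h1 : AEMeasurable (fun θ => ENNReal.ofReal ((ξ (slice θ p) (slice θ q)) ^ r)) μ :=
      (hint p q).1.aemeasurable.ennreal_ofReal
    have h2 : AEMeasurable
        (fun θ => (ENNReal.ofReal ((ξ (slice θ p) (slice θ q)) ^ r)) ^ (1 / r)) μ :=
      h1.pow_const _
    refine h2.congr (ae_of_all μ fun θ => ?_)
    dsimp only
    rw [← ENNReal.ofReal_rpow_of_nonneg (hξ_nonneg _ _) hrpos.le,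
      ← ENNReal.rpow_mul, mul_one_div, div_self hr0, ENNReal.rpow_one]
  refine ⟨hnn, ?_, ?_, ?_⟩
  · -- symmetry
    intro p q
    rw [hζ, hζ]
    congr 1
    exact integral_congr_ae (ae_of_all μ fun θ => by dsimp only; rw [hξ_symm])
  · -- triangle inequality
    intro p h q
    rw [key p q, key p h, key h q,
      ← ENNReal.toReal_add (hfin' p h) (hfin' h q)]
    refine ENNReal.toReal_mono (ENNReal.add_ne_top.mpr ⟨hfin' p h, hfin' h q⟩) ?_
    calc (∫⁻ θ, (ENNReal.ofReal (ξ (slice θ p) (slice θ q))) ^ r ∂μ) ^ (1 / r)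
        ≤ (∫⁻ θ, ((fun θ => ENNReal.ofReal (ξ (slice θ p) (slice θ h))) +
            (fun θ => ENNReal.ofReal (ξ (slice θ h) (slice θ q)))) θ ^ r ∂μ) ^ (1 / r) := by
          refine ENNReal.rpow_le_rpow (lintegral_mono fun θ => ?_) hrinvpos.le
          refine ENNReal.rpow_le_rpow ?_ hrpos.le
          simp only [Pi.add_apply]
          rw [← ENNReal.ofReal_add (hξ_nonneg _ _) (hξ_nonneg _ _)]
          exact ENNReal.ofReal_le_ofReal (hξ_triangle _ _ _)
      _ ≤ _ := ENNReal.lintegral_Lp_add_le (hmeas p h) (hmeas h q) hr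
  · -- ζ p q = 0 ↔ p = q
    intro p q
    constructor
    · intro h0
      rw [hζ] at h0
      have hI : (∫ θ, (ξ (slice θ p) (slice θ q)) ^ r ∂μ) = 0 := by
        have := Real.rpow_natCast -- dummy
        rcases (Real.rpow_eq_zero (hint_nonneg p q) (by positivity)).mp h0 with h
        exact h
      have hae : (fun θ => (ξ (slice θ p) (slice θ q)) ^ r) =ᵐ[μ] 0 :=
        (integral_eq_zero_iff_of_nonneg (fun θ => hpow_nonneg p q θ) (hint p q)).mp hI
      have hnull : μ {θ | ¬ (ξ (slice θ p) (slice θ q)) ^ r = (0:ℝ)} = 0 := by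
        simpa [Filter.EventuallyEq, ae_iff] using hae
      have hempty := hμ _ hnull
      refine hinj p q fun θ => ?_
      have hθ : (ξ (slice θ p) (slice θ q)) ^ r = 0 := by
        by_contra hc
        have : θ ∈ ({θ | ¬ (ξ (slice θ p) (slice θ q)) ^ r = (0:ℝ)} : Set Ω) := hc
        rw [hempty] at this
        exact this
      have : ξ (slice θ p) (slice θ q) = 0 :=
        (Real.rpow_eq_zero (hξ_nonneg _ _) hr0).mp hθ
      exact (hξ_eq _ _).mp this
    · intro hpq
      subst hpq
      rw [hζ]
      have : ∀ θ : Ω, (ξ (slice θ p) (slice θ p)) ^ r = 0 := by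
        intro θ
        rw [(hξ_eq _ _).mpr rfl, Real.zero_rpow hr0]
      simp only [this, integral_zero]
      rw [Real.zero_rpow (ne_of_gt hrinvpos)]
end

section
/- Let g_s : [−T,T] → ℝ be the clamping function g_s(t) = 0 for t ≤ s − σ, g_s(t) = (t − s + σ)/(2σ) for |t − s| < σ, and g_s(t) = 1 for t ≥ s + σ. For a ≤ b with b − a ≥ 2σ and b + σ ≤ T, a − σ ≥ −T: ∫_{−T}^{T} g_a(t) g_b(t) dt = T − b. -/
open MeasureTheory

/-- For the zeroth-order smoothstep (clamping) function
`g_s(t) = 0` for `t ≤ s−σ`, `(t−s+σ)/(2σ)` for `|t−s| < σ`, `1` for `t ≥ s+σ`: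
if `a ≤ b`, `b − a ≥ 2σ`, `b + σ ≤ T`, `a − σ ≥ −T`, then `∫_{−T}^{T} g_a g_b = T − b`. -/
theorem smoothstep_kernel_far
    (σ T a b : ℝ) (hσ : 0 < σ) (hT : 0 < T)
    (g : ℝ → ℝ → ℝ)
    (hg : ∀ s t, g s t =
      if t ≤ s - σ then 0 else if t < s + σ then (t - s + σ) / (2 * σ) else 1)
    (hab : a ≤ b) (hfar : 2 * σ ≤ b - a) (hbT : b + σ ≤ T) (haT : -T ≤ a - σ) :
    ∫ t in (-T)..T, g a t * g b t = T - b := by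
  have haσb : a + σ ≤ b - σ := by linarith
  -- product equals g b pointwise
  have hprod : ∀ t, g a t * g b t = g b t := by
    intro t
    rcases le_or_gt t (b - σ) with h | h
    · rw [hg b t, if_pos h, mul_zero]
    · have h1 : ¬ t ≤ a - σ := by linarith
      have h2 : ¬ t < a + σ := by linarith
      rw [hg a t, if_neg h1, if_neg h2, one_mul]
  have hTbσ : -T ≤ b - σ := by linarith
  have hbb : b - σ ≤ b + σ := by linarith
  -- equality of g b with pieces on each subinterval
  have e1 : Set.EqOn (g b) (fun _ => (0:ℝ)) (Set.uIcc (-T) (b - σ)) := by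
    intro t ht
    rw [Set.uIcc_of_le hTbσ] at ht
    rw [hg b t, if_pos ht.2]
  have e2 : Set.EqOn (g b) (fun t => (t - b + σ) / (2 * σ)) (Set.uIcc (b - σ) (b + σ)) := by
    intro t ht
    rw [Set.uIcc_of_le hbb] at ht
    rcases le_or_gt t (b - σ) with h | h
    · have : t = b - σ := le_antisymm h ht.1
      rw [hg b t, if_pos h, this]
      field_simp
      ring
    · rcases lt_or_ge t (b + σ) with h' | h'
      · rw [hg b t, if_neg (by linarith), if_pos h']
      · have : t = b + σ := le_antisymm ht.2 h'
        rw [hg b t, if_neg (by linarith), if_neg (by linarith), this]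
        field_simp
        ring
  have e3 : Set.EqOn (g b) (fun _ => (1:ℝ)) (Set.uIcc (b + σ) T) := by
    intro t ht
    rw [Set.uIcc_of_le hbT] at ht
    rw [hg b t, if_neg (by nlinarith [ht.1]), if_neg (by nlinarith [ht.1])]
  -- integrability
  have i1 : IntervalIntegrable (g b) volume (-T) (b - σ) :=
    (intervalIntegrable_const (c := (0:ℝ))).congr_ae
      (Filter.eventuallyEq_of_mem (self_mem_ae_restrict measurableSet_uIoc)
        fun t ht => (e1 (Set.uIoc_subset_uIcc ht)).symm)
  have i2 : IntervalIntegrable (g b) volume (b - σ) (b + σ) := by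
    refine IntervalIntegrable.congr_ae ?_
      (Filter.eventuallyEq_of_mem (self_mem_ae_restrict measurableSet_uIoc)
        fun t ht => (e2 (Set.uIoc_subset_uIcc ht)).symm)
    apply IntervalIntegrable.div_const
    exact ((continuous_id.sub continuous_const).add continuous_const).intervalIntegrable _ _
  have i3 : IntervalIntegrable (g b) volume (b + σ) T :=
    (intervalIntegrable_const (c := (1:ℝ))).congr_ae
      (Filter.eventuallyEq_of_mem (self_mem_ae_restrict measurableSet_uIoc)
        fun t ht => (e3 (Set.uIoc_subset_uIcc ht)).symm)
  calc ∫ t in (-T)..T, g a t * g b t = ∫ t in (-T)..T, g b t := by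
        simp only [hprod]
    _ = (∫ t in (-T)..(b-σ), g b t) + ((∫ t in (b-σ)..(b+σ), g b t) + ∫ t in (b+σ)..T, g b t) := by
        rw [intervalIntegral.integral_add_adjacent_intervals i2 i3,
          intervalIntegral.integral_add_adjacent_intervals i1 (i2.trans i3)]
    _ = 0 + (σ + (T - (b + σ))) := by
        congr 1
        · rw [intervalIntegral.integral_congr e1]; simp
        congr 1
        · rw [intervalIntegral.integral_congr e2]
          have h2σ : (2*σ) ≠ 0 := by positivity
          simp only [div_eq_mul_inv]
          rw [intervalIntegral.integral_mul_const]
          have : ∀ t : ℝ, t - b + σ = t + (σ - b) := fun t => by ring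
          simp only [this]
          rw [intervalIntegral.integral_add (f := fun x => x) (continuous_id.intervalIntegrable _ _) intervalIntegrable_const]
          rw [integral_id, intervalIntegral.integral_const]
          field_simp
          ring
        · rw [intervalIntegral.integral_congr e3]; simp
    _ = T - b := by ring
end

section
/- Let g_s be the zeroth-order smoothstep function as above. For a ≤ b with b − a < 2σ, b + σ ≤ T, and a − σ ≥ −T: ∫_{−T}^{T} g_a(t) g_b(t) dt = T − b + (b − a − 2σ)³/(24σ²). -/
open MeasureTheory

lemma integral_quad (c2 c1 c0 x y : ℝ) :
    ∫ t in x..y, (c2*t^2 + c1*t + c0) =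
      c2*(y^3-x^3)/3 + c1*(y^2-x^2)/2 + c0*(y-x) := by
  have h2 : IntervalIntegrable (fun t : ℝ => c2*t^2) volume x y :=
    Continuous.intervalIntegrable (by continuity) x y
  have h1 : IntervalIntegrable (fun t : ℝ => c1*t) volume x y :=
    Continuous.intervalIntegrable (by continuity) x y
  have h0 : IntervalIntegrable (fun _ : ℝ => c0) volume x y :=
    intervalIntegrable_const
  rw [intervalIntegral.integral_add (h2.add h1) h0, intervalIntegral.integral_add h2 h1,
    intervalIntegral.integral_const_mul, intervalIntegral.integral_const_mul,
    integral_pow, integral_id, intervalIntegral.integral_const, smul_eq_mul]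
  push_cast
  ring

/-- For the zeroth-order smoothstep function `g_s` as in Statement 8, if
`a ≤ b`, `b − a < 2σ`, `b + σ ≤ T`, `a − σ ≥ −T`, then
`∫_{−T}^{T} g_a g_b = T − b + (b − a − 2σ)³/(24σ²)`. -/
theorem smoothstep_kernel_near
    (σ T a b : ℝ) (hσ : 0 < σ) (hT : 0 < T)
    (g : ℝ → ℝ → ℝ)
    (hg : ∀ s t, g s t =
      if t ≤ s - σ then 0 else if t < s + σ then (t - s + σ) / (2 * σ) else 1)
    (hab : a ≤ b) (hnear : b - a < 2 * σ) (hbT : b + σ ≤ T) (haT : -T ≤ a - σ) :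
    ∫ t in (-T)..T, g a t * g b t = T - b + (b - a - 2 * σ) ^ 3 / (24 * σ ^ 2) := by
  have hσ0 : (2:ℝ)*σ ≠ 0 := by positivity
  -- continuity of g s
  have hgmax : ∀ s, g s = fun t => max 0 (min 1 ((t - s + σ)/(2*σ))) := by
    intro s
    funext t
    rw [hg]
    split_ifs with hc1 hc2
    · have hx : (t - s + σ)/(2*σ) ≤ 0 :=
        div_nonpos_of_nonpos_of_nonneg (by linarith) (by positivity)
      rw [max_eq_left (le_trans (min_le_right _ _) hx)]
    · have hx0 : 0 ≤ (t - s + σ)/(2*σ) := div_nonneg (by push_neg at hc1; linarith) (by positivity)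
      have hx1 : (t - s + σ)/(2*σ) ≤ 1 := by
        rw [div_le_one (by positivity)]; linarith
      rw [min_eq_right hx1, max_eq_right hx0]
    · have hx1 : (1:ℝ) ≤ (t - s + σ)/(2*σ) := by
        rw [le_div_iff₀ (by positivity)]; push_neg at hc2; linarith
      rw [min_eq_left hx1, max_eq_right (by norm_num)]
  have hgc : ∀ s, Continuous (g s) := by
    intro s; rw [hgmax s]; fun_prop
  have hint : ∀ x y : ℝ, IntervalIntegrable (fun t => g a t * g b t) volume x y := by
    intro x y; exact ((hgc a).mul (hgc b)).intervalIntegrable x y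
  -- pointwise descriptions
  have g_mid : ∀ s t, s - σ ≤ t → t ≤ s + σ → g s t = (t - s + σ)/(2*σ) := by
    intro s t h1 h2
    rw [hg]
    split_ifs with hc1 hc2
    · have ht : t = s - σ := le_antisymm hc1 h1
      subst ht; rw [eq_comm]
      field_simp; ring
    · rfl
    · have ht : t = s + σ := le_antisymm h2 (not_lt.1 hc2)
      subst ht; rw [eq_comm]
      field_simp; ring
  have g_one : ∀ s t, s + σ ≤ t → g s t = 1 := by
    intro s t h1
    rw [hg, if_neg (by linarith), if_neg (by linarith)]
  have g_zero : ∀ s t, t ≤ s - σ → g s t = 0 := by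
    intro s t h1; rw [hg, if_pos h1]
  -- ordering of split points
  have o1 : -T ≤ b - σ := by linarith
  have o2 : b - σ ≤ a + σ := by linarith
  have o3 : a + σ ≤ b + σ := by linarith
  have o4 : b + σ ≤ T := hbT
  -- piece 1
  have e1 : ∫ t in (-T)..(b-σ), g a t * g b t = 0 := by
    rw [intervalIntegral.integral_congr (g := fun _ => (0:ℝ))
      (by intro t ht
          rw [Set.uIcc_of_le o1] at ht
          show g a t * g b t = 0
          rw [g_zero b t ht.2, mul_zero])]
    simp
  -- piece 2
  have e2 : ∫ t in (b-σ)..(a+σ), g a t * g b t =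
      ∫ t in (b-σ)..(a+σ), ((1/(4*σ^2))*t^2 + (-(a+b-2*σ)/(4*σ^2))*t
        + ((a-σ)*(b-σ)/(4*σ^2))) := by
    apply intervalIntegral.integral_congr
    intro t ht
    rw [Set.uIcc_of_le o2] at ht
    show g a t * g b t = _
    rw [g_mid a t (by linarith [ht.1]) ht.2, g_mid b t ht.1 (by linarith [ht.2])]
    field_simp
    ring
  -- piece 3
  have e3 : ∫ t in (a+σ)..(b+σ), g a t * g b t =
      ∫ t in (a+σ)..(b+σ), ((0:ℝ)*t^2 + (1/(2*σ))*t + ((σ-b)/(2*σ))) := by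
    apply intervalIntegral.integral_congr
    intro t ht
    rw [Set.uIcc_of_le o3] at ht
    show g a t * g b t = _
    rw [g_one a t ht.1, g_mid b t (by linarith [ht.1]) ht.2, one_mul]
    field_simp
    ring
  -- piece 4
  have e4 : ∫ t in (b+σ)..T, g a t * g b t = T - (b+σ) := by
    rw [intervalIntegral.integral_congr (g := fun _ => (1:ℝ))
      (by intro t ht
          rw [Set.uIcc_of_le o4] at ht
          show g a t * g b t = 1
          rw [g_one a t (by linarith [ht.1]), g_one b t ht.1, one_mul])]
    simp
  have split :
      (∫ t in (-T)..(b-σ), g a t * g b t) + (∫ t in (b-σ)..(a+σ), g a t * g b t)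
        + (∫ t in (a+σ)..(b+σ), g a t * g b t) + (∫ t in (b+σ)..T, g a t * g b t)
      = ∫ t in (-T)..T, g a t * g b t := by
    rw [intervalIntegral.integral_add_adjacent_intervals (hint _ _) (hint _ _),
      intervalIntegral.integral_add_adjacent_intervals (hint _ _) (hint _ _),
      intervalIntegral.integral_add_adjacent_intervals (hint _ _) (hint _ _)]
  rw [← split, e1, e2, e3, e4, integral_quad, integral_quad]
  field_simp
  ring
end
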